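/- In sl(3), the classical r-matrix r_{JJ} = H₁₂^⊥ ∧ E₁₃ + η H₁₃^⊥ ∧ E₁₂ satisfies the classical Yang–Baxter equation for every scalar η. -/

import Mathlib

set_option maxHeartbeats 1000000

/- STATEMENT 17: In sl(3), r_JJ = H₁₂^⊥ ∧ E₁₃ + η H₁₃^⊥ ∧ E₁₂ satisfies the classical
Yang–Baxter equation for every scalar η, where H₁₂^⊥ = (1/3)(E₁₁+E₂₂−2E₃₃) and
H₁₃^⊥ = (1/3)(E₁₁−2E₂₂+E₃₃).  (0-based matrix indices.) -/

open TensorProduct Matrix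

attribute [local instance 100] LieRing.ofAssociativeRing

noncomputable section

variable (K : Type) [Field K] [CharZero K] (L : Type) [LieRing L] [LieAlgebra K L]

/-- The triple tensor power of the universal enveloping algebra. -/
abbrev UEA3 := UniversalEnvelopingAlgebra K L ⊗[K]
    (UniversalEnvelopingAlgebra K L ⊗[K] UniversalEnvelopingAlgebra K L)

variable {L}

/-- `a ↦ ι a ⊗ 1 ⊗ 1`. -/
def emb1 (a : L) : UEA3 K L :=
  (UniversalEnvelopingAlgebra.ι K a) ⊗ₜ[K] ((1 : UniversalEnvelopingAlgebra K L) ⊗ₜ[K] 1)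

/-- `a ↦ 1 ⊗ ι a ⊗ 1`. -/
def emb2 (a : L) : UEA3 K L :=
  (1 : UniversalEnvelopingAlgebra K L) ⊗ₜ[K] ((UniversalEnvelopingAlgebra.ι K a) ⊗ₜ[K] 1)

/-- `a ↦ 1 ⊗ 1 ⊗ ι a`. -/
def emb3 (a : L) : UEA3 K L :=
  (1 : UniversalEnvelopingAlgebra K L) ⊗ₜ[K]
    ((1 : UniversalEnvelopingAlgebra K L) ⊗ₜ[K] (UniversalEnvelopingAlgebra.ι K a))

/-- `(a ∧ b)₁₂ = a ⊗ b ⊗ 1 − b ⊗ a ⊗ 1`. -/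
def w12 (a b : L) : UEA3 K L := emb1 K a * emb2 K b - emb1 K b * emb2 K a

/-- `(a ∧ b)₁₃ = a ⊗ 1 ⊗ b − b ⊗ 1 ⊗ a`. -/
def w13 (a b : L) : UEA3 K L := emb1 K a * emb3 K b - emb1 K b * emb3 K a

/-- `(a ∧ b)₂₃ = 1 ⊗ a ⊗ b − 1 ⊗ b ⊗ a`. -/
def w23 (a b : L) : UEA3 K L := emb2 K a * emb3 K b - emb2 K b * emb3 K a

def Esl3 (i j : Fin 3) : Matrix (Fin 3) (Fin 3) K := Matrix.single i j 1

def H12perp : Matrix (Fin 3) (Fin 3) K :=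
  (3 : K)⁻¹ • (Esl3 K 0 0 + Esl3 K 1 1 - (2 : K) • Esl3 K 2 2)

def H13perp : Matrix (Fin 3) (Fin 3) K :=
  (3 : K)⁻¹ • (Esl3 K 0 0 - (2 : K) • Esl3 K 1 1 + Esl3 K 2 2)

/-- `(r_JJ)ₚq` as a function of the wedge embedding. -/
def rJJ (η : K)
    (w : Matrix (Fin 3) (Fin 3) K → Matrix (Fin 3) (Fin 3) K → UEA3 K (Matrix (Fin 3) (Fin 3) K)) :
    UEA3 K (Matrix (Fin 3) (Fin 3) K) :=
  w (H12perp K) (Esl3 K 0 2) + η • w (H13perp K) (Esl3 K 0 1)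


set_option linter.unusedSectionVars false
set_option linter.unnecessarySeqFocus false
set_option linter.unreachableTactic false
set_option linter.unusedTactic false

def Wt (a b c : L) : UEA3 K L :=
  (UniversalEnvelopingAlgebra.ι K a) ⊗ₜ[K]
    ((UniversalEnvelopingAlgebra.ι K b) ⊗ₜ[K] (UniversalEnvelopingAlgebra.ι K c))

lemma lie12_13 (a b c d : L) : ⁅w12 K a b, w13 K c d⁆ =
    Wt K ⁅a,c⁆ b d - Wt K ⁅a,d⁆ b c - Wt K ⁅b,c⁆ a d + Wt K ⁅b,d⁆ a c := by
  simp only [w12, w13, emb1, emb2, emb3, Wt, Ring.lie_def, LieHom.map_lie,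
    Algebra.TensorProduct.tmul_mul_tmul, mul_one, one_mul, sub_tmul, tmul_sub,
    mul_sub, sub_mul]
  abel

lemma lie12_23 (a b c d : L) : ⁅w12 K a b, w23 K c d⁆ =
    Wt K a ⁅b,c⁆ d - Wt K a ⁅b,d⁆ c - Wt K b ⁅a,c⁆ d + Wt K b ⁅a,d⁆ c := by
  simp only [w12, w23, emb1, emb2, emb3, Wt, Ring.lie_def, LieHom.map_lie,
    Algebra.TensorProduct.tmul_mul_tmul, mul_one, one_mul, sub_tmul, tmul_sub,
    mul_sub, sub_mul]
  abel

lemma lie13_23 (a b c d : L) : ⁅w13 K a b, w23 K c d⁆ =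
    Wt K a c ⁅b,d⁆ - Wt K a d ⁅b,c⁆ - Wt K b c ⁅a,d⁆ + Wt K b d ⁅a,c⁆ := by
  simp only [w13, w23, emb1, emb2, emb3, Wt, Ring.lie_def, LieHom.map_lie,
    Algebra.TensorProduct.tmul_mul_tmul, mul_one, one_mul, sub_tmul, tmul_sub,
    mul_sub, sub_mul]
  abel

lemma add_lie' (x y z : UEA3 K L) : ⁅x + y, z⁆ = ⁅x, z⁆ + ⁅y, z⁆ := by
  simp only [Ring.lie_def]; noncomm_ring
lemma lie_add' (x y z : UEA3 K L) : ⁅x, y + z⁆ = ⁅x, y⁆ + ⁅x, z⁆ := by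
  simp only [Ring.lie_def]; noncomm_ring
lemma smul_lie' (t : K) (x z : UEA3 K L) : ⁅t • x, z⁆ = t • ⁅x, z⁆ := by
  simp only [Ring.lie_def, smul_mul_assoc, mul_smul_comm, smul_sub]
lemma lie_smul' (t : K) (x z : UEA3 K L) : ⁅x, t • z⁆ = t • ⁅x, z⁆ := by
  simp only [Ring.lie_def, smul_mul_assoc, mul_smul_comm, smul_sub]
lemma lie_self' (x : UEA3 K L) : ⁅x, x⁆ = 0 := by
  simp only [Ring.lie_def, sub_self]

lemma Wt_zero₁ (b c : L) : Wt K (0:L) b c = 0 := by simp [Wt]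
lemma Wt_zero₂ (a c : L) : Wt K a (0:L) c = 0 := by simp [Wt]
lemma Wt_zero₃ (a b : L) : Wt K a b (0:L) = 0 := by simp [Wt]
lemma Wt_neg₁ (a b c : L) : Wt K (-a) b c = -Wt K a b c := by simp [Wt, neg_tmul]
lemma Wt_neg₂ (a b c : L) : Wt K a (-b) c = -Wt K a b c := by simp [Wt, neg_tmul, tmul_neg]
lemma Wt_neg₃ (a b c : L) : Wt K a b (-c) = -Wt K a b c := by simp [Wt, tmul_neg]

lemma hHE : ⁅H12perp K, Esl3 K 0 2⁆ = Esl3 K 0 2 := by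
  ext i j
  fin_cases i <;> fin_cases j <;>
    simp [Ring.lie_def, H12perp, Esl3, Matrix.mul_apply, Fin.sum_univ_three,
      Matrix.single, Matrix.of_apply] <;> ring
lemma hKF : ⁅H13perp K, Esl3 K 0 1⁆ = Esl3 K 0 1 := by
  ext i j
  fin_cases i <;> fin_cases j <;>
    simp [Ring.lie_def, H13perp, Esl3, Matrix.mul_apply, Fin.sum_univ_three,
      Matrix.single, Matrix.of_apply] <;> ring
lemma hHF : ⁅H12perp K, Esl3 K 0 1⁆ = 0 := by
  ext i j
  fin_cases i <;> fin_cases j <;>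
    simp [Ring.lie_def, H12perp, Esl3, Matrix.mul_apply, Fin.sum_univ_three,
      Matrix.single, Matrix.of_apply] <;> ring
lemma hKE : ⁅H13perp K, Esl3 K 0 2⁆ = 0 := by
  ext i j
  fin_cases i <;> fin_cases j <;>
    simp [Ring.lie_def, H13perp, Esl3, Matrix.mul_apply, Fin.sum_univ_three,
      Matrix.single, Matrix.of_apply] <;> ring
lemma hEF : ⁅Esl3 K 0 2, Esl3 K 0 1⁆ = 0 := by
  ext i j
  fin_cases i <;> fin_cases j <;>
    simp [Ring.lie_def, Esl3, Matrix.mul_apply, Fin.sum_univ_three,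
      Matrix.single, Matrix.of_apply]
lemma hHK : ⁅H12perp K, H13perp K⁆ = 0 := by
  ext i j
  fin_cases i <;> fin_cases j <;>
    simp [Ring.lie_def, H12perp, H13perp, Esl3, Matrix.mul_apply, Fin.sum_univ_three,
      Matrix.single, Matrix.of_apply] <;> ring
lemma hEH : ⁅Esl3 K 0 2, H12perp K⁆ = -Esl3 K 0 2 := by rw [← lie_skew, hHE]
lemma hFK : ⁅Esl3 K 0 1, H13perp K⁆ = -Esl3 K 0 1 := by rw [← lie_skew, hKF]
lemma hFH : ⁅Esl3 K 0 1, H12perp K⁆ = 0 := by rw [← lie_skew, hHF, neg_zero]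
lemma hEK : ⁅Esl3 K 0 2, H13perp K⁆ = 0 := by rw [← lie_skew, hKE, neg_zero]
lemma hFE : ⁅Esl3 K 0 1, Esl3 K 0 2⁆ = 0 := by rw [← lie_skew, hEF, neg_zero]
lemma hKH : ⁅H13perp K, H12perp K⁆ = 0 := by rw [← lie_skew, hHK, neg_zero]

theorem stmt17 (η : K) :
    ⁅rJJ K η (w12 K), rJJ K η (w13 K)⁆ + ⁅rJJ K η (w12 K), rJJ K η (w23 K)⁆ +
      ⁅rJJ K η (w13 K), rJJ K η (w23 K)⁆ = 0 := by
  simp only [rJJ, add_lie', lie_add', smul_lie', lie_smul', lie12_13, lie12_23, lie13_23,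
    hHE, hEH, hKF, hFK, hHF, hFH, hKE, hEK, hEF, hFE, hHK, hKH, lie_self,
    Wt_zero₁, Wt_zero₂, Wt_zero₃, Wt_neg₁, Wt_neg₂, Wt_neg₃, smul_zero, smul_neg,
    add_zero, zero_add, neg_zero, sub_zero, zero_sub, sub_self, smul_add, smul_sub]
  module


end
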